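/- For every d ∈ (0,1) and every integer n ≥ 2: (i) g_PM(ω) − d = O((ω − d)^{n+1}) as ω → d, so all derivatives of g_PM at d up to order n vanish; and (ii) the derivative at ω = 1 of the right branch polynomial p(ω) = c₁(ω − d)^{n+1}(ω + c₂) + d (with c₁ = −(n+1)/(1−d)^{n+1}, c₂ = (d − n − 2)/(n+1)) satisfies p′(1) = 0. -/

import Mathlib

open Polynomial Filter Asymptotics

lemma aux_dvd_iterate_deriv (d : ℝ) (j : ℕ) : ∀ (m : ℕ) (R : Polynomial ℝ),
    (X - C d) ^ m ∣ R → (X - C d) ^ (m - j) ∣ derivative^[j] R := by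
  induction j with
  | zero => intro m R h; simpa using h
  | succ j ih =>
    intro m R h
    rw [Function.iterate_succ_apply]
    have hstep : (X - C d) ^ (m - 1) ∣ derivative R := by
      obtain ⟨S, rfl⟩ := h
      rw [derivative_mul, derivative_pow]
      refine dvd_add (dvd_mul_of_dvd_left ?_ _) (dvd_mul_of_dvd_left (pow_dvd_pow _ (Nat.sub_le _ _)) _)
      exact dvd_mul_of_dvd_left (dvd_mul_left _ _) _
    have := ih (m - 1) _ hstep
    rwa [Nat.sub_sub, Nat.add_comm 1 j] at this

lemma aux_iter_deriv_add_const (d : ℝ) (j : ℕ) (hj : 1 ≤ j) (R : Polynomial ℝ) :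
    derivative^[j] (R + C d) = derivative^[j] R := by
  obtain ⟨j, rfl⟩ := Nat.exists_eq_add_of_le hj
  rw [Nat.add_comm, Function.iterate_succ_apply, derivative_add, derivative_C, add_zero,
    ← Function.iterate_succ_apply]

lemma aux_eval_iter_deriv (d a b : ℝ) (n j : ℕ) (hj1 : 1 ≤ j) (hjn : j ≤ n) :
    (derivative^[j] (C a * (X - C d) ^ (n + 1) * (X + C b) + C d)).eval d = 0 := by
  rw [aux_iter_deriv_add_const d j hj1]
  have hdvd : (X - C d) ^ (n + 1) ∣ C a * (X - C d) ^ (n + 1) * (X + C b) :=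
    ⟨C a * (X + C b), by ring⟩
  obtain ⟨S, hS⟩ := aux_dvd_iterate_deriv d j (n + 1) _ hdvd
  rw [hS]
  have hpos : n + 1 - j ≠ 0 := by omega
  simp [sub_self, zero_pow hpos]

lemma aux_eval_P (d a b ω : ℝ) (n : ℕ) :
    (C a * (X - C d) ^ (n + 1) * (X + C b) + C d).eval ω
      = a * (ω - d) ^ (n + 1) * (ω + b) + d := by
  simp

lemma aux_piecewise_hasDerivAt {f g : ℝ → ℝ} {d L : ℝ}
    (hf : HasDerivAt f L d) (hg : HasDerivAt g L d) (hfg : f d = g d) :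
    HasDerivAt (fun ω => if ω ≤ d then f ω else g ω) L d := by
  rw [hasDerivAt_iff_tendsto_slope] at hf hg ⊢
  rw [← nhdsLT_sup_nhdsGT, tendsto_sup]
  constructor
  · refine (hf.mono_left (nhdsWithin_mono _ fun x hx => ne_of_lt hx)).congr' ?_
    filter_upwards [self_mem_nhdsWithin] with x (hx : x < d)
    simp [slope_def_field, hx.le]
  · refine (hg.mono_left (nhdsWithin_mono _ fun x hx => ne_of_gt hx)).congr' ?_
    filter_upwards [self_mem_nhdsWithin] with x (hx : d < x)
    simp [slope_def_field, not_le.2 hx, hfg]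

lemma aux_piecewise_deriv {f g f' g' : ℝ → ℝ} {d : ℝ}
    (hf : ∀ x, HasDerivAt f (f' x) x) (hg : ∀ x, HasDerivAt g (g' x) x)
    (hfg : f d = g d) (hfg' : f' d = g' d) (x : ℝ) :
    HasDerivAt (fun ω => if ω ≤ d then f ω else g ω)
      (if x ≤ d then f' x else g' x) x := by
  rcases lt_trichotomy x d with h | h | h
  · rw [if_pos h.le]
    refine (hf x).congr_of_eventuallyEq ?_
    filter_upwards [Iio_mem_nhds h] with y (hy : y < d)
    simp [hy.le]
  · subst h
    rw [if_pos le_rfl]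
    exact aux_piecewise_hasDerivAt (hf x) (hfg' ▸ hg x) hfg
  · rw [if_neg (not_le.2 h)]
    refine (hg x).congr_of_eventuallyEq ?_
    filter_upwards [Ioi_mem_nhds h] with y (hy : d < y)
    simp [not_le.2 hy]

theorem stmt5 (d : ℝ) (hd : d ∈ Set.Ioo (0 : ℝ) 1) (n : ℕ) (hn : 2 ≤ n)
    (gPM : ℝ → ℝ)
    (hgPM : ∀ ω : ℝ, gPM ω =
      if ω ≤ d then
        ((-1) ^ n * ((n : ℝ) + 1) / d ^ (n + 1)) * (ω - d) ^ (n + 1) * (ω + d / ((n : ℝ) + 1)) + d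
      else
        (-((n : ℝ) + 1) / (1 - d) ^ (n + 1)) * (ω - d) ^ (n + 1) *
          (ω + (d - (n : ℝ) - 2) / ((n : ℝ) + 1)) + d)
    (p : ℝ → ℝ)
    (hp : ∀ ω : ℝ, p ω =
      (-((n : ℝ) + 1) / (1 - d) ^ (n + 1)) * (ω - d) ^ (n + 1) *
        (ω + (d - (n : ℝ) - 2) / ((n : ℝ) + 1)) + d) :
    ((fun ω : ℝ => gPM ω - d) =O[nhds d] fun ω : ℝ => (ω - d) ^ (n + 1)) ∧
    (∀ k : ℕ, 1 ≤ k → k ≤ n → iteratedDeriv k gPM d = 0) ∧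
    deriv p 1 = 0 := by
  set a₁ : ℝ := (-1) ^ n * ((n : ℝ) + 1) / d ^ (n + 1) with ha₁
  set b₁ : ℝ := d / ((n : ℝ) + 1) with hb₁
  set a₂ : ℝ := -((n : ℝ) + 1) / (1 - d) ^ (n + 1) with ha₂
  set b₂ : ℝ := (d - (n : ℝ) - 2) / ((n : ℝ) + 1) with hb₂
  refine ⟨?_, ?_, ?_⟩
  · -- Big-O
    rw [isBigO_iff]
    refine ⟨(|a₁| + |a₂|) * (|d| + 1 + |b₁| + |b₂|), ?_⟩
    filter_upwards [Metric.ball_mem_nhds d one_pos] with ω hω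
    have hωd : |ω - d| < 1 := by simpa [Real.dist_eq] using hω
    have hωb : |ω| ≤ |d| + 1 := by
      calc |ω| = |d + (ω - d)| := by ring_nf
        _ ≤ |d| + |ω - d| := abs_add_le _ _
        _ ≤ |d| + 1 := by linarith
    rw [hgPM ω]
    have key : ∀ a b : ℝ, |a| ≤ |a₁| + |a₂| → |b| ≤ |b₁| + |b₂| →
        |a * (ω - d) ^ (n + 1) * (ω + b)| ≤
          (|a₁| + |a₂|) * (|d| + 1 + |b₁| + |b₂|) * ‖(ω - d) ^ (n + 1)‖ := by
      intro a b ha hb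
      rw [abs_mul, abs_mul, Real.norm_eq_abs]
      have h1 : |ω + b| ≤ |d| + 1 + |b₁| + |b₂| := by
        calc |ω + b| ≤ |ω| + |b| := abs_add_le _ _
          _ ≤ |d| + 1 + (|b₁| + |b₂|) := add_le_add hωb hb
          _ = |d| + 1 + |b₁| + |b₂| := by ring
      calc |a| * |(ω - d) ^ (n + 1)| * |ω + b|
          ≤ (|a₁| + |a₂|) * |(ω - d) ^ (n + 1)| * (|d| + 1 + |b₁| + |b₂|) := by
            apply mul_le_mul (mul_le_mul_of_nonneg_right ha (abs_nonneg _)) h1 (abs_nonneg _)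
            positivity
        _ = (|a₁| + |a₂|) * (|d| + 1 + |b₁| + |b₂|) * |(ω - d) ^ (n + 1)| := by ring
    split_ifs with h
    · rw [add_sub_cancel_right, Real.norm_eq_abs]
      exact key a₁ b₁ (le_add_of_nonneg_right (abs_nonneg _)) (le_add_of_nonneg_right (abs_nonneg _))
    · rw [add_sub_cancel_right, Real.norm_eq_abs]
      exact key a₂ b₂ (le_add_of_nonneg_left (abs_nonneg _)) (le_add_of_nonneg_left (abs_nonneg _))
  · -- derivatives vanish
    intro k hk1 hkn
    set P : Polynomial ℝ := C a₁ * (X - C d) ^ (n + 1) * (X + C b₁) + C d with hP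
    set Q : Polynomial ℝ := C a₂ * (X - C d) ^ (n + 1) * (X + C b₂) + C d with hQ
    have heq : ∀ j, j ≤ n → (derivative^[j] P).eval d = (derivative^[j] Q).eval d := by
      intro j hj
      rcases Nat.eq_zero_or_pos j with rfl | hj1
      · have hne : n + 1 ≠ 0 := by omega
        simp [hP, hQ, sub_self, zero_pow hne]
      · rw [aux_eval_iter_deriv d a₁ b₁ n j hj1 hj, aux_eval_iter_deriv d a₂ b₂ n j hj1 hj]
    have hiter : ∀ j, j ≤ n → deriv^[j] gPM =
        fun ω => if ω ≤ d then (derivative^[j] P).eval ω else (derivative^[j] Q).eval ω := by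
      intro j
      induction j with
      | zero =>
        intro _
        funext ω
        simp only [Function.iterate_zero, id_eq, hgPM ω, hP, hQ, aux_eval_P]
      | succ j ih =>
        intro hjn
        rw [Function.iterate_succ_apply', ih (by omega)]
        funext x
        have hd1 : ∀ y : ℝ, HasDerivAt (fun ω => (derivative^[j] P).eval ω)
            ((derivative^[j + 1] P).eval y) y := by
          intro y
          rw [Function.iterate_succ_apply']
          exact (derivative^[j] P).hasDerivAt y
        have hd2 : ∀ y : ℝ, HasDerivAt (fun ω => (derivative^[j] Q).eval ω)
            ((derivative^[j + 1] Q).eval y) y := by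
          intro y
          rw [Function.iterate_succ_apply']
          exact (derivative^[j] Q).hasDerivAt y
        exact (aux_piecewise_deriv hd1 hd2 (heq j (by omega)) (heq (j + 1) hjn) x).deriv
    rw [iteratedDeriv_eq_iterate, hiter k hkn]
    simp only [le_refl, if_pos]
    rw [hP]
    exact aux_eval_iter_deriv d a₁ b₁ n k hk1 hkn
  · -- deriv p 1 = 0
    have hpfun : p = fun ω => a₂ * ((ω - d) ^ (n + 1) * (ω + b₂)) + d := by
      funext ω; rw [hp ω]; ring
    have h1 : HasDerivAt (fun ω : ℝ => (ω - d) ^ (n + 1))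
        (((n : ℝ) + 1) * (1 - d) ^ n * 1) 1 := by
      have := ((hasDerivAt_id (1 : ℝ)).sub_const d).fun_pow (n + 1)
      simpa using this
    have h2 : HasDerivAt (fun ω : ℝ => ω + b₂) 1 1 := (hasDerivAt_id 1).add_const b₂
    have h3 : HasDerivAt p
        (a₂ * ((((n : ℝ) + 1) * (1 - d) ^ n * 1) * (1 + b₂) + (1 - d) ^ (n + 1) * 1)) 1 := by
      rw [hpfun]
      exact (((h1.mul h2).const_mul a₂).add_const d)
    rw [h3.deriv]
    have hn1 : ((n : ℝ) + 1) ≠ 0 := by positivity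
    rw [hb₂]
    field_simp
    ring
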